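/- Let X be the formal power series in ℤ⟦t⟧ whose coefficient of tⁿ is the sum of area(w) over all Motzkin paths w of length n. Then t² − (3t − 1)(t + 1)(t² + 2t − 1)·X + t²·(3t − 1)²·(t + 1)²·X² = 0 in ℤ⟦t⟧. -/

import Mathlib

open Finset

/-- Height after `i` steps of the walk `s`, starting at height `a`. -/
def height {n : ℕ} (a : ℤ) (s : Fin n → ℤ) (i : ℕ) : ℤ :=
  a + ∑ j ∈ Finset.univ.filter (fun j : Fin n => (j : ℕ) < i), s j

/-- The area under a path: the sum of its intermediate heights h_1 + ⋯ + h_{n−1}. -/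
def area {n : ℕ} (s : Fin n → ℤ) : ℤ :=
  ∑ i ∈ Finset.Ico 1 n, height 0 s i

open scoped Classical in
/-- Motzkin paths of length `n`. -/
noncomputable def motzkinPaths (n : ℕ) : Finset (Fin n → ℤ) :=
  (Fintype.piFinset fun _ => ({1, 0, -1} : Finset ℤ)).filter
    (fun s => (∀ i ∈ Finset.Icc 1 n, 0 ≤ height 0 s i) ∧ height 0 s n = 0)

/-- The generating function whose coefficient of tⁿ is the sum of the areas of
all Motzkin paths of length n. -/
noncomputable def A : PowerSeries ℤ :=
  PowerSeries.mk fun n => ∑ w ∈ motzkinPaths n, area w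

namespace Stmt19Aux

/-- extension of a finite path to ℕ by 0 -/
def ext {n : ℕ} (s : Fin n → ℤ) (j : ℕ) : ℤ := if h : j < n then s ⟨j, h⟩ else 0

/-- prefix sums -/
def ps (f : ℕ → ℤ) (i : ℕ) : ℤ := ∑ j ∈ Finset.range i, f j

lemma ps_zero (f : ℕ → ℤ) : ps f 0 = 0 := by simp [ps]

lemma ps_succ (f : ℕ → ℤ) (i : ℕ) : ps f (i+1) = ps f i + f i := by
  simp [ps, Finset.sum_range_succ]

lemma height_succ {n : ℕ} (a : ℤ) (s : Fin n → ℤ) (i : ℕ) :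
    height a s (i+1) = height a s i + ext s i := by
  unfold height ext
  rw [add_assoc]
  congr 1
  by_cases h : i < n
  · rw [dif_pos h]
    have hset : Finset.univ.filter (fun j : Fin n => (j:ℕ) < i + 1)
        = insert ⟨i, h⟩ (Finset.univ.filter (fun j : Fin n => (j:ℕ) < i)) := by
      ext j
      simp only [Finset.mem_filter, Finset.mem_univ, Finset.mem_insert, true_and, Fin.ext_iff]
      omega
    rw [hset, Finset.sum_insert (by simp)]
    ring
  · rw [dif_neg h]
    have hset : Finset.univ.filter (fun j : Fin n => (j:ℕ) < i + 1)
        = Finset.univ.filter (fun j : Fin n => (j:ℕ) < i) := by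
      ext j
      have := j.2
      simp only [Finset.mem_filter, Finset.mem_univ, true_and]
      omega
    rw [hset, add_zero]

lemma height_eq {n : ℕ} (a : ℤ) (s : Fin n → ℤ) (i : ℕ) :
    height a s i = a + ps (ext s) i := by
  induction i with
  | zero => simp [height, ps]
  | succ i ih => rw [height_succ, ih, ps_succ]; ring

lemma mem_motzkin {n : ℕ} {s : Fin n → ℤ} :
    s ∈ motzkinPaths n ↔
      (∀ j : Fin n, s j = 1 ∨ s j = 0 ∨ s j = -1)
        ∧ (∀ i : ℕ, 1 ≤ i → i ≤ n → 0 ≤ ps (ext s) i) ∧ ps (ext s) n = 0 := by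
  classical
  simp only [motzkinPaths, Finset.mem_filter, Fintype.mem_piFinset, Finset.mem_insert,
    Finset.mem_singleton, Finset.mem_Icc, height_eq, zero_add, and_imp, and_assoc]

lemma ext_values {n : ℕ} {s : Fin n → ℤ} (hs : s ∈ motzkinPaths n) (j : ℕ) :
    ext s j = 1 ∨ ext s j = 0 ∨ ext s j = -1 := by
  unfold ext
  split
  · exact mem_motzkin.mp hs |>.1 _
  · tauto

lemma ps_nonneg {n : ℕ} {s : Fin n → ℤ} (hs : s ∈ motzkinPaths n) {i : ℕ} (hi : i ≤ n) :
    0 ≤ ps (ext s) i := by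
  rcases Nat.eq_zero_or_pos i with h | h
  · subst h; simp [ps_zero]
  · exact (mem_motzkin.mp hs).2.1 i h hi

end Stmt19Aux

namespace Stmt19Aux

lemma ext_apply_lt {n : ℕ} (s : Fin n → ℤ) {j : ℕ} (h : j < n) : ext s j = s ⟨j, h⟩ :=
  dif_pos h

lemma ext_eq_zero {n : ℕ} (s : Fin n → ℤ) {j : ℕ} (h : n ≤ j) : ext s j = 0 :=
  dif_neg (by omega)

def flatE (v : ℕ → ℤ) (j : ℕ) : ℤ := if j = 0 then 0 else v (j-1)

def glueE (k : ℕ) (w v : ℕ → ℤ) (j : ℕ) : ℤ :=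
  if j = 0 then 1 else if j ≤ k then w (j-1) else if j = k+1 then -1 else v (j-(k+2))

def flat {m N : ℕ} (v : Fin m → ℤ) : Fin N → ℤ := fun i => flatE (ext v) i

def glue {k m N : ℕ} (w : Fin k → ℤ) (v : Fin m → ℤ) : Fin N → ℤ :=
  fun i => glueE k (ext w) (ext v) i

def restr {N : ℕ} (s : Fin N → ℤ) (off : ℕ) {m : ℕ} : Fin m → ℤ :=
  fun j => ext s ((j : ℕ) + off)

lemma ext_flat {m N : ℕ} (hN : N = m + 1) (v : Fin m → ℤ) :
    ext (flat v : Fin N → ℤ) = flatE (ext v) := by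
  funext j
  by_cases h : j < N
  · rw [ext_apply_lt _ h]; rfl
  · rw [ext_eq_zero _ (by omega)]
    unfold flatE
    rw [if_neg (by omega : ¬ j = 0), ext_eq_zero _ (by omega)]

lemma ext_glue {k m N : ℕ} (hN : N = k + m + 2) (w : Fin k → ℤ) (v : Fin m → ℤ) :
    ext (glue w v : Fin N → ℤ) = glueE k (ext w) (ext v) := by
  funext j
  by_cases h : j < N
  · rw [ext_apply_lt _ h]; rfl
  · rw [ext_eq_zero _ (by omega)]
    unfold glueE
    rw [if_neg (by omega : ¬ j = 0), if_neg (by omega : ¬ j ≤ k),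
      if_neg (by omega : ¬ j = k + 1), ext_eq_zero _ (by omega)]

lemma ps_flatE (f : ℕ → ℤ) (i : ℕ) : ps (flatE f) (i+1) = ps f i := by
  induction i with
  | zero => simp [ps_succ, ps_zero, flatE]
  | succ i ih =>
      rw [ps_succ, ih, ps_succ]
      unfold flatE
      rw [if_neg (by omega)]
      norm_num

lemma ps_glueE_low (k : ℕ) (w v : ℕ → ℤ) {i : ℕ} (hi : i ≤ k) :
    ps (glueE k w v) (i+1) = 1 + ps w i := by
  induction i with
  | zero => simp [ps_succ, ps_zero, glueE]
  | succ i ih =>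
      rw [ps_succ, ih (by omega), ps_succ]
      have hg : glueE k w v (i+1) = w i := by
        unfold glueE
        rw [if_neg (by omega), if_pos (by omega)]
        norm_num
      rw [hg]; ring

lemma ps_glueE_high (k : ℕ) (w v : ℕ → ℤ) (i : ℕ) :
    ps (glueE k w v) (k+2+i) = ps w k + ps v i := by
  induction i with
  | zero =>
      have h1 : k + 2 + 0 = (k+1) + 1 := by omega
      rw [h1, ps_succ, ps_glueE_low k w v (le_refl k)]
      have hg : glueE k w v (k+1) = -1 := by
        unfold glueE
        rw [if_neg (by omega), if_neg (by omega), if_pos rfl]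
      rw [hg, ps_zero]; ring
  | succ i ih =>
      have h1 : k + 2 + (i+1) = (k+2+i) + 1 := by omega
      rw [h1, ps_succ, ih, ps_succ]
      have hg : glueE k w v (k+2+i) = v i := by
        unfold glueE
        rw [if_neg (by omega), if_neg (by omega), if_neg (by omega)]
        congr 1
        omega
      rw [hg]; ring

lemma ps_restr {N m : ℕ} (s : Fin N → ℤ) (off : ℕ) :
    ∀ i, i ≤ m → ps (ext (restr s off : Fin m → ℤ)) i + ps (ext s) off = ps (ext s) (i + off) := by
  intro i
  induction i with
  | zero => simp [ps_zero]
  | succ i ih =>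
      intro hi
      rw [ps_succ]
      have hext : ext (restr s off : Fin m → ℤ) i = ext s (i + off) := by
        rw [ext_apply_lt _ (by omega : i < m)]; rfl
      rw [hext]
      have h2 : i + 1 + off = (i + off) + 1 := by omega
      rw [h2, ps_succ]
      have := ih (by omega)
      linarith

end Stmt19Aux

namespace Stmt19Aux

lemma flat_apply {m N : ℕ} (v : Fin m → ℤ) (j : Fin N) :
    (flat v : Fin N → ℤ) j = flatE (ext v) (j : ℕ) := rfl

lemma glue_apply {k m N : ℕ} (w : Fin k → ℤ) (v : Fin m → ℤ) (j : Fin N) :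
    (glue w v : Fin N → ℤ) j = glueE k (ext w) (ext v) (j : ℕ) := rfl

lemma mem_flat {m : ℕ} {v : Fin m → ℤ} (hv : v ∈ motzkinPaths m) {N : ℕ} (hN : N = m + 1) :
    (flat v : Fin N → ℤ) ∈ motzkinPaths N := by
  obtain ⟨hst, hge, hend⟩ := mem_motzkin.mp hv
  rw [mem_motzkin, ext_flat hN]
  refine ⟨?_, ?_, ?_⟩
  · intro j
    simp only [flat_apply]
    unfold flatE
    split
    · tauto
    · exact ext_values hv _
  · intro i h1 h2
    obtain ⟨i', rfl⟩ : ∃ i', i = i' + 1 := ⟨i - 1, by omega⟩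
    rw [ps_flatE]
    exact ps_nonneg hv (by omega)
  · subst hN
    rw [ps_flatE]
    exact hend

lemma mem_glue {k m : ℕ} {w : Fin k → ℤ} {v : Fin m → ℤ}
    (hw : w ∈ motzkinPaths k) (hv : v ∈ motzkinPaths m) {N : ℕ} (hN : N = k + m + 2) :
    (glue w v : Fin N → ℤ) ∈ motzkinPaths N := by
  obtain ⟨hwst, hwge, hwend⟩ := mem_motzkin.mp hw
  obtain ⟨hvst, hvge, hvend⟩ := mem_motzkin.mp hv
  rw [mem_motzkin, ext_glue hN]
  refine ⟨?_, ?_, ?_⟩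
  · intro j
    simp only [glue_apply]
    unfold glueE
    split
    · tauto
    · split
      · exact ext_values hw _
      · split
        · tauto
        · exact ext_values hv _
  · intro i h1 h2
    by_cases hik : i ≤ k + 1
    · obtain ⟨i', rfl⟩ : ∃ i', i = i' + 1 := ⟨i - 1, by omega⟩
      rw [ps_glueE_low k _ _ (by omega)]
      have := ps_nonneg hw (show i' ≤ k by omega)
      linarith
    · obtain ⟨i', rfl⟩ : ∃ i', i = k + 2 + i' := ⟨i - (k+2), by omega⟩
      rw [ps_glueE_high]
      have h3 := ps_nonneg hv (show i' ≤ m by omega)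
      rw [hwend]
      linarith
  · subst hN
    have h4 : k + m + 2 = k + 2 + m := by omega
    rw [h4, ps_glueE_high, hwend, hvend]
    ring

lemma area_eq {n : ℕ} (s : Fin n → ℤ) : area s = ∑ i ∈ Finset.range n, ps (ext s) i := by
  unfold area
  simp only [height_eq, zero_add]
  rcases Nat.eq_zero_or_pos n with h | h
  · subst h; simp
  · have hins : Finset.Ico 0 n = insert 0 (Finset.Ico 1 n) := by
      ext j; simp; omega
    rw [Finset.range_eq_Ico, hins, Finset.sum_insert (by simp), ps_zero, zero_add]

end Stmt19Aux

namespace Stmt19Aux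

lemma area_flat {m : ℕ} (v : Fin m → ℤ) {N : ℕ} (hN : N = m + 1) :
    area (flat v : Fin N → ℤ) = area v := by
  subst hN
  rw [area_eq, area_eq, ext_flat rfl]
  rw [Finset.sum_range_succ' (fun i => ps (flatE (ext v)) i) m]
  simp only [ps_flatE, ps_zero, add_zero]

lemma area_glue {k m : ℕ} {w : Fin k → ℤ} (v : Fin m → ℤ)
    (hw : w ∈ motzkinPaths k) {N : ℕ} (hN : N = k + m + 2) :
    area (glue w v : Fin N → ℤ) = area w + area v + (k + 1 : ℕ) := by
  subst hN
  have hwend : ps (ext w) k = 0 := (mem_motzkin.mp hw).2.2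
  rw [area_eq, ext_glue rfl]
  have hsplit : k + m + 2 = (k + 2) + m := by omega
  rw [hsplit, Finset.sum_range_add]
  have h2 : ∑ i ∈ Finset.range m, ps (glueE k (ext w) (ext v)) (k + 2 + i)
      = area v := by
    rw [area_eq]
    refine Finset.sum_congr rfl fun i _ => ?_
    rw [ps_glueE_high, hwend, zero_add]
  have h1 : ∑ i ∈ Finset.range (k+2), ps (glueE k (ext w) (ext v)) i
      = area w + (k+1 : ℕ) := by
    rw [Finset.sum_range_succ' (fun i => ps (glueE k (ext w) (ext v)) i) (k+1), ps_zero, add_zero]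
    have : ∀ i ∈ Finset.range (k+1), ps (glueE k (ext w) (ext v)) (i+1) = 1 + ps (ext w) i :=
      fun i hi => ps_glueE_low k _ _ (by simpa using Nat.lt_succ_iff.mp (Finset.mem_range.mp hi))
    rw [Finset.sum_congr rfl this, Finset.sum_add_distrib, Finset.sum_const, Finset.card_range,
      Finset.sum_range_succ, hwend, add_zero, ← area_eq]
    push_cast
    ring
  rw [h1, h2]
  ring

end Stmt19Aux

namespace Stmt19Aux

/-- First return time to height 0. -/
noncomputable def fr {N : ℕ} (s : Fin N → ℤ) : ℕ :=
  sInf {i | 1 ≤ i ∧ ps (ext s) i = 0}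

section fr

variable {N : ℕ} {s : Fin N → ℤ} (hs : s ∈ motzkinPaths N) (hN : 1 ≤ N)

include hs hN

lemma fr_set_mem : N ∈ {i | 1 ≤ i ∧ ps (ext s) i = 0} :=
  ⟨hN, (mem_motzkin.mp hs).2.2⟩

lemma fr_spec : 1 ≤ fr s ∧ ps (ext s) (fr s) = 0 :=
  Nat.sInf_mem (Set.nonempty_of_mem (fr_set_mem hs hN))

lemma fr_le : fr s ≤ N := Nat.sInf_le (fr_set_mem hs hN)

lemma fr_min {i : ℕ} (h1 : 1 ≤ i) (hlt : i < fr s) : 1 ≤ ps (ext s) i := by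
  have hne : ps (ext s) i ≠ 0 := by
    intro h0
    have hmem : i ∈ {i | 1 ≤ i ∧ ps (ext s) i = 0} := ⟨h1, h0⟩
    have : fr s ≤ i := Nat.sInf_le hmem
    omega
  have hge : 0 ≤ ps (ext s) i :=
    ps_nonneg hs (le_trans (le_of_lt hlt) (fr_le hs hN))
  omega

omit hN in
lemma step_in {j : ℕ} : ext s j ≤ 1 ∧ -1 ≤ ext s j := by
  rcases ext_values hs j with h | h | h <;> omega

/-- when `s 0 = 1` the first return is at least 2 -/
lemma fr_ge_two (h0 : ext s 0 = 1) : 2 ≤ fr s := by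
  have h1 : ps (ext s) 1 = 1 := by rw [ps_succ, ps_zero, h0]; norm_num
  have hne : fr s ≠ 1 := by
    intro h
    have := (fr_spec hs hN).2
    rw [h, h1] at this
    exact one_ne_zero this
  have := (fr_spec hs hN).1
  omega

/-- just before first return the height is 1 and the step is -1 -/
lemma fr_pred (h0 : ext s 0 = 1) :
    ps (ext s) (fr s - 1) = 1 ∧ ext s (fr s - 1) = -1 := by
  have h2 := fr_ge_two hs hN h0
  have hlow : 1 ≤ ps (ext s) (fr s - 1) := fr_min hs hN (by omega) (by omega)
  have hzero : ps (ext s) (fr s) = 0 := (fr_spec hs hN).2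
  obtain ⟨r, hrr⟩ : ∃ r, fr s = r + 1 := ⟨fr s - 1, by omega⟩
  rw [hrr] at hzero hlow ⊢
  rw [ps_succ] at hzero
  simp only [Nat.add_sub_cancel] at hlow
  simp only [Nat.add_sub_cancel]
  have := (step_in hs (j := r))
  constructor <;> omega

end fr

/-- the zeroth entry being 1, via ext -/
lemma s0_one {N : ℕ} {s : Fin N → ℤ} (hs : s ∈ motzkinPaths N) (hN : 1 ≤ N)
    (h0 : s ⟨0, by omega⟩ ≠ 0) : ext s 0 = 1 := by
  have he : ext s 0 = s ⟨0, by omega⟩ := ext_apply_lt _ (by omega)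
  have hv := (mem_motzkin.mp hs).1 ⟨0, by omega⟩
  have hge := ps_nonneg hs (show 1 ≤ N from hN)
  rw [ps_succ, ps_zero, zero_add, he] at hge
  rcases hv with h | h | h
  · rw [he, h]
  · exact absurd h h0
  · rw [h] at hge; omega

lemma fr_glue {k m N : ℕ} {w : Fin k → ℤ} {v : Fin m → ℤ}
    (hw : w ∈ motzkinPaths k) (hN : N = k + m + 2) :
    fr (glue w v : Fin N → ℤ) = k + 2 := by
  have hwend : ps (ext w) k = 0 := (mem_motzkin.mp hw).2.2
  have hmem : (k + 2) ∈ {i | 1 ≤ i ∧ ps (ext (glue w v : Fin N → ℤ)) i = 0} := by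
    refine ⟨by omega, ?_⟩
    rw [ext_glue hN]
    have : k + 2 = k + 2 + 0 := by omega
    rw [this, ps_glueE_high, hwend, ps_zero, add_zero]
  have hle : fr (glue w v : Fin N → ℤ) ≤ k + 2 := Nat.sInf_le hmem
  have hge : ¬ fr (glue w v : Fin N → ℤ) < k + 2 := by
    intro hlt
    have hmem' : 1 ≤ fr (glue w v : Fin N → ℤ) ∧
        ps (ext (glue w v : Fin N → ℤ)) (fr (glue w v : Fin N → ℤ)) = 0 :=
      Nat.sInf_mem (Set.nonempty_of_mem hmem)
    obtain ⟨hr1, hr0⟩ := hmem'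
    rw [ext_glue hN] at hr0
    obtain ⟨i', hi'⟩ : ∃ i', fr (glue w v : Fin N → ℤ) = i' + 1 :=
      ⟨fr (glue w v : Fin N → ℤ) - 1, by omega⟩
    rw [hi', ps_glueE_low k _ _ (by omega)] at hr0
    have := ps_nonneg hw (show i' ≤ k by omega)
    omega
  omega

end Stmt19Aux

namespace Stmt19Aux

lemma ext_eq_apply {N : ℕ} (s : Fin N → ℤ) (i : Fin N) : ext s (i : ℕ) = s i := by
  rw [ext_apply_lt _ i.2]

lemma restr_apply {N m : ℕ} (s : Fin N → ℤ) (off : ℕ) (j : Fin m) :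
    (restr s off : Fin m → ℤ) j = ext s ((j : ℕ) + off) := rfl

lemma ext_restr_lt {N m : ℕ} (s : Fin N → ℤ) (off : ℕ) {j : ℕ} (hj : j < m) :
    ext (restr s off : Fin m → ℤ) j = ext s (j + off) := by
  rw [ext_apply_lt _ hj]; rfl

lemma tail_mem {n : ℕ} {s : Fin (n+1) → ℤ} (hs : s ∈ motzkinPaths (n+1))
    (h0 : ext s 0 = 0) : (restr s 1 : Fin n → ℤ) ∈ motzkinPaths n := by
  have hps1 : ps (ext s) 1 = 0 := by rw [ps_succ, ps_zero, h0]; ring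
  rw [mem_motzkin]
  refine ⟨?_, ?_, ?_⟩
  · intro j
    rw [restr_apply]
    exact ext_values hs _
  · intro i h1 h2
    have := ps_restr s 1 i h2
    rw [hps1] at this
    have h3 : 0 ≤ ps (ext s) (i + 1) := ps_nonneg hs (by omega)
    omega
  · have := ps_restr s 1 n (le_refl n)
    rw [hps1] at this
    have h3 : ps (ext s) (n + 1) = 0 := (mem_motzkin.mp hs).2.2
    omega

lemma flat_restr_eq {n : ℕ} {s : Fin (n+1) → ℤ} (h0 : ext s 0 = 0) :
    (flat (restr s 1 : Fin n → ℤ) : Fin (n+1) → ℤ) = s := by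
  funext i
  rw [flat_apply, ← ext_eq_apply s i]
  unfold flatE
  by_cases h : (i : ℕ) = 0
  · rw [if_pos h, h, h0]
  · rw [if_neg h, ext_restr_lt s 1 (by omega : (i:ℕ) - 1 < n)]
    congr 1
    omega

lemma restr_flat {n : ℕ} (v : Fin n → ℤ) :
    (restr (flat v : Fin (n+1) → ℤ) 1 : Fin n → ℤ) = v := by
  funext j
  rw [restr_apply, ext_apply_lt _ (by omega : (j:ℕ) + 1 < n + 1), flat_apply]
  show flatE (ext v) ((j:ℕ) + 1) = v j
  unfold flatE
  rw [if_neg (by omega)]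
  simp only [Nat.add_sub_cancel]
  exact ext_eq_apply v j

section mid

variable {n k m : ℕ} {s : Fin (n+1) → ℤ} (hs : s ∈ motzkinPaths (n+1))
  (h0 : ext s 0 = 1) (hkm : n + 1 = k + m + 2) (hfr : fr s = k + 2)

include hs h0 hkm hfr

lemma mid_mem : (restr s 1 : Fin k → ℤ) ∈ motzkinPaths k := by
  have hN1 : 1 ≤ n + 1 := by omega
  have hps1 : ps (ext s) 1 = 1 := by rw [ps_succ, ps_zero, h0]; ring
  rw [mem_motzkin]
  refine ⟨fun j => by rw [restr_apply]; exact ext_values hs _, ?_, ?_⟩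
  · intro i h1 h2
    have heq := ps_restr s 1 i h2
    rw [hps1] at heq
    have h3 : 1 ≤ ps (ext s) (i + 1) := fr_min hs hN1 (by omega) (by omega)
    omega
  · have heq := ps_restr s 1 k (le_refl k)
    rw [hps1] at heq
    have h3 := (fr_pred hs hN1 h0).1
    rw [hfr, (by omega : k + 2 - 1 = k + 1)] at h3
    omega

omit h0 in
lemma tailp_mem : (restr s (k+2) : Fin m → ℤ) ∈ motzkinPaths m := by
  have hN1 : 1 ≤ n + 1 := by omega
  have hpsr : ps (ext s) (k+2) = 0 := by
    have := (fr_spec hs hN1).2; rwa [hfr] at this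
  rw [mem_motzkin]
  refine ⟨fun j => by rw [restr_apply]; exact ext_values hs _, ?_, ?_⟩
  · intro i h1 h2
    have heq := ps_restr s (k+2) i h2
    rw [hpsr] at heq
    have h3 : 0 ≤ ps (ext s) (i + (k+2)) := ps_nonneg hs (by omega)
    omega
  · have heq := ps_restr s (k+2) m (le_refl m)
    rw [hpsr] at heq
    have h3 : ps (ext s) (n+1) = 0 := (mem_motzkin.mp hs).2.2
    have h4 : m + (k + 2) = n + 1 := by omega
    rw [h4] at heq
    omega

lemma glue_restr_eq :
    (glue (restr s 1 : Fin k → ℤ) (restr s (k+2) : Fin m → ℤ) : Fin (n+1) → ℤ) = s := by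
  have hN1 : 1 ≤ n + 1 := by omega
  funext i
  rw [glue_apply, ← ext_eq_apply s i]
  unfold glueE
  by_cases hi0 : (i : ℕ) = 0
  · rw [if_pos hi0, hi0, h0]
  · rw [if_neg hi0]
    by_cases hik : (i : ℕ) ≤ k
    · rw [if_pos hik, ext_restr_lt s 1 (by omega : (i:ℕ) - 1 < k)]
      congr 1
      omega
    · rw [if_neg hik]
      by_cases hik1 : (i : ℕ) = k + 1
      · rw [if_pos hik1]
        have h3 := (fr_pred hs hN1 h0).2
        rw [hfr, (by omega : k + 2 - 1 = k + 1)] at h3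
        rw [hik1, h3]
      · rw [if_neg hik1,
          ext_restr_lt s (k+2) (by have := i.2; omega : (i:ℕ) - (k+2) < m)]
        congr 1
        omega

end mid

lemma restr_glue_left {k m N : ℕ} (w : Fin k → ℤ) (v : Fin m → ℤ) (hN : N = k + m + 2) :
    (restr (glue w v : Fin N → ℤ) 1 : Fin k → ℤ) = w := by
  funext j
  rw [restr_apply, ext_apply_lt _ (by omega : (j:ℕ) + 1 < N), glue_apply]
  show glueE k (ext w) (ext v) ((j:ℕ) + 1) = w j
  unfold glueE
  rw [if_neg (by omega), if_pos (by have := j.2; omega)]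
  simp only [Nat.add_sub_cancel]
  exact ext_eq_apply w j

lemma restr_glue_right {k m N : ℕ} (w : Fin k → ℤ) (v : Fin m → ℤ) (hN : N = k + m + 2) :
    (restr (glue w v : Fin N → ℤ) (k+2) : Fin m → ℤ) = v := by
  funext j
  rw [restr_apply, ext_apply_lt _ (by have := j.2; omega : (j:ℕ) + (k+2) < N), glue_apply]
  show glueE k (ext w) (ext v) ((j:ℕ) + (k+2)) = v j
  unfold glueE
  rw [if_neg (by omega), if_neg (by omega), if_neg (by omega)]
  simp only [Nat.add_sub_cancel]
  exact ext_eq_apply v j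

end Stmt19Aux

namespace Stmt19Aux

theorem sum_motzkin_succ (n : ℕ) (g : (Fin (n+1) → ℤ) → ℤ) :
    ∑ s ∈ motzkinPaths (n+1), g s
      = (∑ v ∈ motzkinPaths n, g (flat v))
        + ∑ k ∈ Finset.range n, ∑ w ∈ motzkinPaths k, ∑ v ∈ motzkinPaths (n-1-k),
            g (glue w v) := by
  classical
  rw [← Finset.sum_filter_add_sum_filter_not (motzkinPaths (n+1)) (fun s => ext s 0 = 0) g]
  congr 1
  · -- flat part
    refine Finset.sum_nbij' (fun s => (restr s 1 : Fin n → ℤ)) (fun v => (flat v : Fin (n+1) → ℤ))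
      ?_ ?_ ?_ ?_ ?_
    · intro s hsmem
      rw [Finset.mem_filter] at hsmem
      exact tail_mem hsmem.1 hsmem.2
    · intro v hv
      rw [Finset.mem_filter]
      refine ⟨mem_flat hv rfl, ?_⟩
      rw [ext_flat rfl]
      rfl
    · intro s hsmem
      rw [Finset.mem_filter] at hsmem
      exact flat_restr_eq hsmem.2
    · intro v _
      exact restr_flat v
    · intro s hsmem
      rw [Finset.mem_filter] at hsmem
      rw [flat_restr_eq hsmem.2]
  · -- glue part
    have hmaps : ∀ s ∈ (motzkinPaths (n+1)).filter (fun s => ¬ ext s 0 = 0),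
        fr s - 2 ∈ Finset.range n := by
      intro s hsmem
      rw [Finset.mem_filter] at hsmem
      obtain ⟨hs, hs0⟩ := hsmem
      have h0 : ext s 0 = 1 := by
        rw [ext_apply_lt _ (by omega : 0 < n + 1)] at hs0
        exact s0_one hs (by omega) hs0
      have h2 := fr_ge_two hs (by omega) h0
      have hle := fr_le hs (by omega)
      rw [Finset.mem_range]
      omega
    rw [← Finset.sum_fiberwise_of_maps_to hmaps g]
    refine Finset.sum_congr rfl fun k hk => ?_
    rw [Finset.mem_range] at hk
    rw [← Finset.sum_product' (s := motzkinPaths k) (t := motzkinPaths (n-1-k))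
      (f := fun w v => g (glue w v))]
    have hkm : n + 1 = k + (n-1-k) + 2 := by omega
    refine Finset.sum_nbij'
      (fun s => ((restr s 1 : Fin k → ℤ), (restr s (k+2) : Fin (n-1-k) → ℤ)))
      (fun p => (glue p.1 p.2 : Fin (n+1) → ℤ)) ?_ ?_ ?_ ?_ ?_
    · intro s hsmem
      simp only [Finset.mem_filter] at hsmem
      obtain ⟨⟨hs, hs0⟩, hfr2⟩ := hsmem
      have h0 : ext s 0 = 1 := by
        rw [ext_apply_lt _ (by omega : 0 < n + 1)] at hs0
        exact s0_one hs (by omega) hs0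
      have hfr : fr s = k + 2 := by
        have := fr_ge_two hs (by omega) h0
        omega
      rw [Finset.mem_product]
      exact ⟨mid_mem hs h0 hkm hfr, tailp_mem hs hkm hfr⟩
    · intro p hp
      rw [Finset.mem_product] at hp
      simp only [Finset.mem_filter]
      have hg0 : ext (glue p.1 p.2 : Fin (n+1) → ℤ) 0 = 1 := by
        rw [ext_glue hkm]
        rfl
      refine ⟨⟨mem_glue hp.1 hp.2 hkm, by rw [hg0]; norm_num⟩, ?_⟩
      rw [fr_glue hp.1 hkm]
      omega
    · intro s hsmem
      simp only [Finset.mem_filter] at hsmem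
      obtain ⟨⟨hs, hs0⟩, hfr2⟩ := hsmem
      have h0 : ext s 0 = 1 := by
        rw [ext_apply_lt _ (by omega : 0 < n + 1)] at hs0
        exact s0_one hs (by omega) hs0
      have hfr : fr s = k + 2 := by
        have := fr_ge_two hs (by omega) h0
        omega
      exact glue_restr_eq hs h0 hkm hfr
    · intro p hp
      rw [Finset.mem_product] at hp
      ext1
      · exact restr_glue_left p.1 p.2 hkm
      · exact restr_glue_right p.1 p.2 hkm
    · intro s hsmem
      simp only [Finset.mem_filter] at hsmem
      obtain ⟨⟨hs, hs0⟩, hfr2⟩ := hsmem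
      have h0 : ext s 0 = 1 := by
        rw [ext_apply_lt _ (by omega : 0 < n + 1)] at hs0
        exact s0_one hs (by omega) hs0
      have hfr : fr s = k + 2 := by
        have := fr_ge_two hs (by omega) h0
        omega
      rw [glue_restr_eq hs h0 hkm hfr]

end Stmt19Aux

namespace Stmt19Aux

noncomputable def mz (n : ℕ) : ℤ := ((motzkinPaths n).card : ℤ)

noncomputable def az (n : ℕ) : ℤ := ∑ w ∈ motzkinPaths n, area w

lemma motzkin_zero : motzkinPaths 0 = {(fun i => 0 : Fin 0 → ℤ)} := by
  ext s
  simp only [Finset.mem_singleton]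
  constructor
  · intro _
    funext i
    exact absurd i.2 (by omega)
  · intro h
    rw [mem_motzkin]
    refine ⟨fun j => absurd j.2 (by omega), fun i h1 h2 => by omega, by rw [ps_zero]⟩

lemma mz_zero : mz 0 = 1 := by rw [mz, motzkin_zero]; simp

lemma az_zero : az 0 = 0 := by
  rw [az, motzkin_zero]
  simp [area]

lemma mz_rec (n : ℕ) :
    mz (n+1) = mz n + ∑ k ∈ Finset.range n, mz k * mz (n-1-k) := by
  have h := sum_motzkin_succ n (fun _ => (1 : ℤ))
  simp only [Finset.sum_const, Finset.card_range, nsmul_eq_mul, mul_one] at h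
  unfold mz
  rw [h]

lemma az_rec (n : ℕ) :
    az (n+1) = az n + ∑ k ∈ Finset.range n,
      (az k * mz (n-1-k) + mz k * az (n-1-k) + ((k:ℤ)+1) * (mz k * mz (n-1-k))) := by
  have h := sum_motzkin_succ n (fun s => area s)
  unfold az mz
  rw [h]
  congr 1
  · exact Finset.sum_congr rfl fun v _ => area_flat v rfl
  · refine Finset.sum_congr rfl fun k hk => ?_
    rw [Finset.mem_range] at hk
    have hkm : n + 1 = k + (n-1-k) + 2 := by omega
    rw [Finset.sum_congr rfl fun w hw => Finset.sum_congr rfl fun v hv => area_glue v hw hkm]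
    simp only [Finset.sum_add_distrib, Finset.sum_const, nsmul_eq_mul, Finset.mul_sum,
      Finset.sum_mul]
    push_cast
    ring_nf

end Stmt19Aux

namespace Stmt19Aux

open PowerSeries

noncomputable def Mz : PowerSeries ℤ := PowerSeries.mk mz

noncomputable def Bz : PowerSeries ℤ := PowerSeries.mk fun n => ((n:ℤ)+1) * mz n

lemma coeff_Mz (n : ℕ) : (coeff n) Mz = mz n := coeff_mk n _

lemma coeff_Bz (n : ℕ) : (coeff n) Bz = ((n:ℤ)+1) * mz n := coeff_mk n _

lemma coeff_A (n : ℕ) : (coeff n) A = az n := by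
  have hA : A = PowerSeries.mk az := rfl
  rw [hA, coeff_mk]

lemma coeff_zero_X_mul (f : PowerSeries ℤ) : (coeff 0) (X * f) = 0 := by
  rw [coeff_zero_eq_constantCoeff, map_mul, constantCoeff_X, zero_mul]

lemma coeff_X2_mul (f : PowerSeries ℤ) (n : ℕ) :
    (coeff (n+2)) (X^2 * f) = (coeff n) f := by
  rw [pow_two, mul_assoc, (by omega : n + 2 = (n+1)+1), coeff_succ_X_mul, coeff_succ_X_mul]

lemma coeff_zero_X2_mul (f : PowerSeries ℤ) : (coeff 0) (X^2 * f) = 0 := by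
  rw [pow_two, mul_assoc, coeff_zero_X_mul]

lemma coeff_one_X2_mul (f : PowerSeries ℤ) : (coeff 1) (X^2 * f) = 0 := by
  rw [pow_two, mul_assoc, (by omega : (1:ℕ) = 0+1), coeff_succ_X_mul, coeff_zero_X_mul]

lemma coeff_sq (f : PowerSeries ℤ) (n : ℕ) :
    (coeff n) (f^2) = ∑ k ∈ Finset.range (n+1), (coeff k f) * (coeff (n-k) f) := by
  rw [pow_two, coeff_mul, Finset.Nat.sum_antidiagonal_eq_sum_range_succ_mk]

lemma mz_one : mz 1 = 1 := by
  have := mz_rec 0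
  simp only [Finset.range_zero, Finset.sum_empty, add_zero] at this
  rw [this, mz_zero]

lemma az_one : az 1 = 0 := by
  have := az_rec 0
  simp only [Finset.range_zero, Finset.sum_empty, add_zero] at this
  rw [this, az_zero]

lemma R2 : Mz = 1 + X * Mz + X^2 * Mz^2 := by
  ext n
  rw [map_add, map_add, coeff_Mz]
  match n with
  | 0 =>
      rw [coeff_zero_X_mul, coeff_zero_X2_mul, coeff_one, if_pos rfl, mz_zero]
      ring
  | 1 =>
      rw [(by omega : (1:ℕ) = 0+1), coeff_succ_X_mul, coeff_one_X2_mul, coeff_one,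
        if_neg (by omega), coeff_Mz, mz_one, mz_zero]
      norm_num
  | (n+2) =>
      rw [(by omega : n + 2 = (n+1)+1), coeff_succ_X_mul, (by omega : n + 1 + 1 = n + 2),
        coeff_X2_mul, coeff_sq, coeff_one, if_neg (by omega), coeff_Mz]
      rw [mz_rec (n+1), zero_add]
      congr 1
      refine Finset.sum_congr rfl fun k hk => ?_
      rw [Finset.mem_range] at hk
      rw [coeff_Mz, coeff_Mz]
      congr 2

lemma hBz : Bz = Mz + X * (PowerSeries.derivative ℤ Mz) := by
  ext n
  rw [coeff_Bz, map_add, coeff_Mz]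
  match n with
  | 0 => norm_num
  | (n+1) =>
      rw [coeff_succ_X_mul, PowerSeries.coeff_derivative, coeff_Mz]
      push_cast
      ring

lemma R1 : A = X * A + X^2 * ((2 * A + Bz) * Mz) := by
  ext n
  rw [map_add, coeff_A]
  match n with
  | 0 =>
      rw [coeff_zero_X_mul, coeff_zero_X2_mul, az_zero]
      ring
  | 1 =>
      rw [az_one, coeff_one_X2_mul, (by omega : (1:ℕ) = 0+1), coeff_succ_X_mul, coeff_A,
        az_zero]
      ring
  | (n+2) =>
      rw [(by omega : n + 2 = (n+1)+1), coeff_succ_X_mul, (by omega : n + 1 + 1 = n + 2),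
        coeff_X2_mul, coeff_A, coeff_mul, Finset.Nat.sum_antidiagonal_eq_sum_range_succ_mk]
      have hrec : az (n+1+1) = az (n+1) + ∑ k ∈ Finset.range (n+1),
          (az k * mz (n-k) + mz k * az (n-k) + ((k:ℤ)+1) * (mz k * mz (n-k))) := by
        rw [az_rec (n+1)]
        norm_num
      rw [hrec]
      have hsym : ∑ k ∈ Finset.range (n+1), mz k * az (n-k)
          = ∑ k ∈ Finset.range (n+1), az k * mz (n-k) := by
        rw [← Finset.sum_range_reflect (fun k => mz k * az (n-k)) (n+1)]
        refine Finset.sum_congr rfl fun k hk => ?_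
        rw [Finset.mem_range] at hk
        have e1 : n + 1 - 1 - k = n - k := by omega
        rw [e1]
        have e2 : n - (n - k) = k := by omega
        rw [e2]
        ring
      congr 1
      rw [Finset.sum_add_distrib, Finset.sum_add_distrib, hsym,
        ← Finset.sum_add_distrib, ← Finset.sum_add_distrib]
      refine Finset.sum_congr rfl fun k hk => ?_
      rw [map_add, two_mul, map_add, coeff_A, coeff_Bz, coeff_Mz]
      ring

end Stmt19Aux

/-- t² − (3t − 1)(t + 1)(t² + 2t − 1)·X + t²·(3t − 1)²·(t + 1)²·X² = 0
for the generating function X of the sums of areas of Motzkin paths. -/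



theorem stmt19 :
    (PowerSeries.X : PowerSeries ℤ) ^ 2
      - (3 * (PowerSeries.X : PowerSeries ℤ) - 1) * ((PowerSeries.X : PowerSeries ℤ) + 1) *
          ((PowerSeries.X : PowerSeries ℤ) ^ 2 + 2 * (PowerSeries.X : PowerSeries ℤ) - 1) * A
      + (PowerSeries.X : PowerSeries ℤ) ^ 2 *
          (3 * (PowerSeries.X : PowerSeries ℤ) - 1) ^ 2 *
          ((PowerSeries.X : PowerSeries ℤ) + 1) ^ 2 * A ^ 2 = 0 := by
  have R2 := Stmt19Aux.R2
  have hBz := Stmt19Aux.hBz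
  have R1 := Stmt19Aux.R1
  set Mz := Stmt19Aux.Mz with hMz
  set Bz := Stmt19Aux.Bz with hBzdef
  have h3 := congrArg (fun f => PowerSeries.derivative ℤ f) R2
  simp only [map_add, Derivation.leibniz, Derivation.leibniz_pow, PowerSeries.derivative_X,
    Derivation.map_one_eq_zero, smul_eq_mul, nsmul_eq_mul, mul_one, zero_add, pow_one] at h3
  norm_num at h3
  have hS2 : ((1 : PowerSeries ℤ) - PowerSeries.X - 2*PowerSeries.X^2*Mz)^2 = 1 - 2*PowerSeries.X - 3*PowerSeries.X^2 := by
    linear_combination (-4*(PowerSeries.X:PowerSeries ℤ)^2) * R2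
  have hBS : Bz * (1 - PowerSeries.X - 2*PowerSeries.X^2*Mz) = Mz := by
    linear_combination ((1:PowerSeries ℤ) - PowerSeries.X - 2*PowerSeries.X^2*Mz) * hBz + (PowerSeries.X:PowerSeries ℤ) * h3
  have hAS : A * (1 - PowerSeries.X - 2*PowerSeries.X^2*Mz) = PowerSeries.X^2*Mz*Bz := by
    linear_combination R1
  have hAP : A * (1 - 2*PowerSeries.X - 3*PowerSeries.X^2) = PowerSeries.X^2*Mz^2 := by
    linear_combination ((1:PowerSeries ℤ) - PowerSeries.X - 2*PowerSeries.X^2*Mz) * hAS + PowerSeries.X^2*Mz*hBS + (-A) * hS2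
  linear_combination (-(PowerSeries.X:PowerSeries ℤ)^2*(1 + PowerSeries.X^2*Mz^2 + (1-PowerSeries.X)*Mz)) * R2
    + ((PowerSeries.X^2+2*PowerSeries.X-1) + PowerSeries.X^2*(A*(1-2*PowerSeries.X-3*PowerSeries.X^2) + PowerSeries.X^2*Mz^2)) * hAP
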